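/- Every recursion-free strategy terminates (is total): for every strategy s built from Id, Fail, Seq, Choice, All, One and every term t, there exists a result r (either none or some t') such that eval s t r. -/

import Mathlib

inductive Term where
  | Node : String → List Term → Term

inductive Strategy where
  | Id : Strategy
  | Fail : Strategy
  | Seq : Strategy → Strategy → Strategy
  | Choice : Strategy → Strategy → Strategy
  | All : Strategy → Strategy
  | One : Strategy → Strategy

inductive eval : Strategy → Term → Option Term → Prop where
  | id : ∀ t, eval .Id t (some t)
  | fail : ∀ t, eval .Fail t none
  | seq_fail : ∀ {s s' : Strategy} {t : Term},
      eval s t none → eval (.Seq s s') t none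
  | seq_ok : ∀ {s s' : Strategy} {t t' : Term} {r : Option Term},
      eval s t (some t') → eval s' t' r → eval (.Seq s s') t r
  | choice_ok : ∀ {s s' : Strategy} {t t' : Term},
      eval s t (some t') → eval (.Choice s s') t (some t')
  | choice_fail : ∀ {s s' : Strategy} {t : Term} {r : Option Term},
      eval s t none → eval s' t r → eval (.Choice s s') t r
  | all_ok : ∀ {s : Strategy} {c : String} {ts ts' : List Term},
      ts'.length = ts.length →
      (∀ i (hi : i < ts.length) (hi' : i < ts'.length),
        eval s (ts.get ⟨i, hi⟩) (some (ts'.get ⟨i, hi'⟩))) →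
      eval (.All s) (.Node c ts) (some (.Node c ts'))
  | all_fail : ∀ {s : Strategy} {c : String} {ts : List Term} {t : Term},
      t ∈ ts → eval s t none → eval (.All s) (.Node c ts) none
  | one_ok : ∀ {s : Strategy} {c : String} {ts : List Term} {t' : Term} {i : ℕ}
      (hi : i < ts.length),
      eval s (ts.get ⟨i, hi⟩) (some t') →
      (∀ j (hj : j < i), eval s (ts.get ⟨j, Nat.lt_trans hj hi⟩) none) →
      eval (.One s) (.Node c ts) (some (.Node c (ts.set i t')))
  | one_fail : ∀ {s : Strategy} {c : String} {ts : List Term},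
      (∀ t ∈ ts, eval s t none) → eval (.One s) (.Node c ts) none

theorem stmt15 : ∀ (s : Strategy) (t : Term), ∃ r : Option Term, eval s t r := by
  intro s
  induction s with
  | Id => exact fun t => ⟨some t, eval.id t⟩
  | Fail => exact fun t => ⟨none, eval.fail t⟩
  | Seq s s' ih ih' =>
    intro t
    obtain ⟨r, hr⟩ := ih t
    cases r with
    | none => exact ⟨none, eval.seq_fail hr⟩
    | some t' =>
      obtain ⟨r', hr'⟩ := ih' t'
      exact ⟨r', eval.seq_ok hr hr'⟩
  | Choice s s' ih ih' =>
    intro t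
    obtain ⟨r, hr⟩ := ih t
    cases r with
    | none =>
      obtain ⟨r', hr'⟩ := ih' t
      exact ⟨r', eval.choice_fail hr hr'⟩
    | some t' => exact ⟨some t', eval.choice_ok hr⟩
  | All s ih =>
    intro t
    classical
    obtain ⟨c, ts⟩ := t
    set f : Term → Option Term := fun u => Classical.choose (ih u) with hf
    have hfe : ∀ u, eval s u (f u) := fun u => Classical.choose_spec (ih u)
    by_cases h : ∃ u ∈ ts, f u = none
    · obtain ⟨u, hu, hun⟩ := h
      exact ⟨none, eval.all_fail hu (hun ▸ hfe u)⟩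
    · push_neg at h
      have hsome : ∀ u ∈ ts, (f u).isSome := by
        intro u hu
        exact Option.isSome_iff_ne_none.mpr (h u hu)
      refine ⟨some (.Node c (ts.attach.map (fun x => (f x.1).get (hsome x.1 x.2)))),
        eval.all_ok ?_ ?_⟩
      · simp
      · intro i hi hi'
        have hget : (ts.attach.map (fun x => (f x.1).get (hsome x.1 x.2))).get ⟨i, hi'⟩
            = (f (ts.get ⟨i, hi⟩)).get (hsome _ (List.get_mem ts ⟨i, hi⟩)) := by
          simp [List.get_eq_getElem, List.getElem_map, List.getElem_attach]
        rw [hget]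
        have := hfe (ts.get ⟨i, hi⟩)
        rwa [← Option.some_get (hsome _ (List.get_mem ts ⟨i, hi⟩))] at this
  | One s ih =>
    intro t
    classical
    obtain ⟨c, ts⟩ := t
    set f : Term → Option Term := fun u => Classical.choose (ih u) with hf
    have hfe : ∀ u, eval s u (f u) := fun u => Classical.choose_spec (ih u)
    by_cases h : ∃ i, ∃ hi : i < ts.length, f (ts.get ⟨i, hi⟩) ≠ none
    · have hP := Nat.find_spec h
      obtain ⟨hi, hne⟩ := hP
      set i := Nat.find h
      obtain ⟨t', ht'⟩ := Option.ne_none_iff_exists'.mp hne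
      refine ⟨some (.Node c (ts.set i t')), eval.one_ok hi (ht' ▸ hfe _) ?_⟩
      intro j hj
      have hnj := Nat.find_min h hj
      push_neg at hnj
      have := hnj (Nat.lt_trans hj hi)
      have heval := hfe (ts.get ⟨j, Nat.lt_trans hj hi⟩)
      rwa [this] at heval
    · push_neg at h
      refine ⟨none, eval.one_fail ?_⟩
      intro u hu
      obtain ⟨n, rfl⟩ := List.get_of_mem hu
      have hn := h n.1 n.2
      have heval := hfe (ts.get n)
      simp only [Fin.eta] at hn
      rwa [hn] at heval
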